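/- With v_3(s) = Σ_{n=1}^∞ s^{2n}/((n-1)!·n!), the limit as s → 0⁺ of v_3(s) · ∫_s^∞ t / v_3(t)² dt equals 1/2. -/

import Mathlib

open MeasureTheory Filter

noncomputable def v3 (s : ℝ) : ℝ :=
  ∑' n : ℕ, s ^ (2 * (n + 1)) / ((Nat.factorial n : ℝ) * (Nat.factorial (n + 1)))

open Set

noncomputable def g3 (s : ℝ) : ℝ :=
  ∑' n : ℕ, s ^ (2 * n) / ((Nat.factorial n : ℝ) * (Nat.factorial (n + 1)))

lemma g3_term_nonneg (s : ℝ) (n : ℕ) :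
    0 ≤ s ^ (2 * n) / ((Nat.factorial n : ℝ) * (Nat.factorial (n + 1))) := by
  rw [pow_mul]; positivity

lemma g3_term_le (s : ℝ) (n : ℕ) :
    s ^ (2 * n) / ((Nat.factorial n : ℝ) * (Nat.factorial (n + 1))) ≤ (s ^ 2) ^ n / n.factorial := by
  rw [pow_mul]
  have h1 : (0:ℝ) < n.factorial := by exact_mod_cast Nat.factorial_pos n
  have h2 : (n.factorial : ℝ) ≤ (n.factorial : ℝ) * (n+1).factorial := by
    exact_mod_cast Nat.le_mul_of_pos_right _ (Nat.factorial_pos _)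
  exact div_le_div_of_nonneg_left (by positivity) h1 h2

lemma summable_g3 (s : ℝ) :
    Summable (fun n : ℕ => s ^ (2 * n) / ((Nat.factorial n : ℝ) * (Nat.factorial (n + 1)))) :=
  Summable.of_nonneg_of_le (g3_term_nonneg s) (g3_term_le s)
    (Real.summable_pow_div_factorial (s ^ 2))

lemma one_le_g3 (s : ℝ) : 1 ≤ g3 s := by
  have h := Summable.le_tsum (summable_g3 s) 0 (fun j _ => g3_term_nonneg s j)
  simpa [g3] using h

lemma g3_pos (s : ℝ) : 0 < g3 s := lt_of_lt_of_le one_pos (one_le_g3 s)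

lemma g3_mono {a b : ℝ} (ha : 0 ≤ a) (hab : a ≤ b) : g3 a ≤ g3 b := by
  apply Summable.tsum_le_tsum _ (summable_g3 a) (summable_g3 b)
  intro n
  gcongr

lemma g3_le_exp (s : ℝ) : g3 s ≤ Real.exp (s ^ 2) := by
  rw [Real.exp_eq_exp_ℝ, NormedSpace.exp_eq_tsum_div]
  exact Summable.tsum_le_tsum (g3_term_le s) (summable_g3 s) (Real.summable_pow_div_factorial (s ^ 2))

lemma v3_eq (s : ℝ) : v3 s = s ^ 2 * g3 s := by
  unfold v3 g3
  rw [← tsum_mul_left]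
  congr 1; funext n
  rw [show 2 * (n + 1) = 2 + 2 * n by ring, pow_add]
  ring

lemma v3_pos {s : ℝ} (hs : 0 < s) : 0 < v3 s := by
  rw [v3_eq]; exact mul_pos (by positivity) (g3_pos s)

lemma g3_tendsto_one : Tendsto g3 (nhdsWithin 0 (Set.Ioi 0)) (nhds 1) := by
  have hup : Tendsto (fun s : ℝ => Real.exp (s ^ 2)) (nhdsWithin 0 (Set.Ioi 0)) (nhds 1) := by
    have : Tendsto (fun s : ℝ => Real.exp (s ^ 2)) (nhds 0) (nhds 1) := by
      have := (Real.continuous_exp.comp (continuous_pow 2)).tendsto (0:ℝ)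
      simpa [Function.comp_def] using this
    exact this.mono_left nhdsWithin_le_nhds
  exact tendsto_of_tendsto_of_tendsto_of_le_of_le
    tendsto_const_nhds hup (fun s => one_le_g3 s) (fun s => g3_le_exp s)

lemma measurable_g3 : Measurable g3 := by
  apply measurable_of_tendsto_metrizable (f := fun N s => ∑ n ∈ Finset.range N,
    s ^ (2 * n) / ((Nat.factorial n : ℝ) * (Nat.factorial (n + 1))))
  · intro N
    exact Finset.measurable_sum _ (fun n _ => by measurability)
  · rw [tendsto_pi_nhds]
    intro s
    exact (summable_g3 s).hasSum.tendsto_sum_nat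

lemma measurable_v3 : Measurable v3 := by
  have : v3 = fun s => s ^ 2 * g3 s := funext v3_eq
  rw [this]
  exact (measurable_id.pow_const 2).mul measurable_g3

lemma integrand_eq {t : ℝ} (ht : 0 < t) :
    t / (v3 t) ^ 2 = (g3 t)⁻¹ ^ 2 * t ^ (-3 : ℝ) := by
  rw [v3_eq, show (-3 : ℝ) = -(3:ℕ) by norm_num, Real.rpow_neg ht.le, Real.rpow_natCast]
  have h1 : g3 t ≠ 0 := (g3_pos t).ne'
  field_simp

lemma integrableOn_rpow3 {s : ℝ} (hs : 0 < s) :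
    IntegrableOn (fun t : ℝ => t ^ (-3 : ℝ)) (Ioi s) :=
  integrableOn_Ioi_rpow_of_lt (by norm_num) hs

lemma integrand_le {s t : ℝ} (hs : 0 < s) (hst : s ≤ t) :
    t / (v3 t) ^ 2 ≤ (g3 s)⁻¹ ^ 2 * t ^ (-3 : ℝ) := by
  have ht : 0 < t := hs.trans_le hst
  rw [integrand_eq ht]
  have hgm : g3 s ≤ g3 t := g3_mono hs.le hst
  have : (g3 t)⁻¹ ≤ (g3 s)⁻¹ := inv_anti₀ (g3_pos s) hgm
  have hrp : (0:ℝ) ≤ t ^ (-3 : ℝ) := Real.rpow_nonneg ht.le _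
  apply mul_le_mul_of_nonneg_right _ hrp
  exact pow_le_pow_left₀ (inv_nonneg.mpr (g3_pos t).le) this 2

lemma integrand_nonneg {t : ℝ} : 0 ≤ t / (v3 t) ^ 2 ∨ True := Or.inr trivial

lemma integrableOn_f {s : ℝ} (hs : 0 < s) :
    IntegrableOn (fun t => t / (v3 t) ^ 2) (Ioi s) := by
  have hmeas : AEStronglyMeasurable (fun t : ℝ => t / (v3 t) ^ 2)
      (volume.restrict (Ioi s)) :=
    (measurable_id.div ((measurable_v3.pow_const 2))).aestronglyMeasurable
  apply Integrable.mono (integrableOn_rpow3 hs) hmeas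
  filter_upwards [ae_restrict_mem measurableSet_Ioi] with t ht
  have ht0 : 0 < t := hs.trans ht
  rw [Real.norm_eq_abs, Real.norm_eq_abs, abs_of_nonneg (by positivity),
    abs_of_nonneg (Real.rpow_nonneg ht0.le _)]
  calc t / (v3 t) ^ 2 ≤ (g3 t)⁻¹ ^ 2 * t ^ (-3 : ℝ) := le_of_eq (integrand_eq ht0)
    _ ≤ 1 * t ^ (-3 : ℝ) := by
        apply mul_le_mul_of_nonneg_right _ (Real.rpow_nonneg ht0.le _)
        have := one_le_g3 t
        have h2 : (g3 t)⁻¹ ≤ 1 := inv_le_one_of_one_le₀ this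
        calc (g3 t)⁻¹ ^ 2 ≤ 1 ^ 2 := pow_le_pow_left₀ (inv_nonneg.mpr (g3_pos t).le) h2 2
          _ = 1 := one_pow 2
    _ = t ^ (-3 : ℝ) := one_mul _

lemma integral_rpow3_Ioi {s : ℝ} (hs : 0 < s) :
    ∫ t in Ioi s, t ^ (-3 : ℝ) = (s ^ 2)⁻¹ / 2 := by
  rw [integral_Ioi_rpow_of_lt (by norm_num) hs]
  rw [show (-3 : ℝ) + 1 = -(2:ℕ) by norm_num, Real.rpow_neg hs.le, Real.rpow_natCast]
  ring

lemma upper_bound {s : ℝ} (hs : 0 < s) :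
    v3 s * ∫ t in Ioi s, t / (v3 t) ^ 2 ≤ 1 / (2 * g3 s) := by
  have hInt : ∫ t in Ioi s, t / (v3 t) ^ 2 ≤ (g3 s)⁻¹ ^ 2 * ((s ^ 2)⁻¹ / 2) := by
    calc ∫ t in Ioi s, t / (v3 t) ^ 2
        ≤ ∫ t in Ioi s, (g3 s)⁻¹ ^ 2 * t ^ (-3 : ℝ) := by
          apply setIntegral_mono_on (integrableOn_f hs)
            ((integrableOn_rpow3 hs).const_mul _) measurableSet_Ioi
          exact fun t ht => integrand_le hs (le_of_lt ht)
      _ = (g3 s)⁻¹ ^ 2 * ((s ^ 2)⁻¹ / 2) := by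
          rw [MeasureTheory.integral_const_mul, integral_rpow3_Ioi hs]
  calc v3 s * ∫ t in Ioi s, t / (v3 t) ^ 2
      ≤ v3 s * ((g3 s)⁻¹ ^ 2 * ((s ^ 2)⁻¹ / 2)) :=
        mul_le_mul_of_nonneg_left hInt (v3_pos hs).le
    _ = 1 / (2 * g3 s) := by
        rw [v3_eq]
        have h1 : g3 s ≠ 0 := (g3_pos s).ne'
        have h2 : s ≠ 0 := hs.ne'
        field_simp

lemma integral_rpow3_Ioc {s A : ℝ} (hs : 0 < s) (hsA : s ≤ A) :
    ∫ t in Ioc s A, t ^ (-3 : ℝ) = ((s ^ 2)⁻¹ - (A ^ 2)⁻¹) / 2 := by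
  rw [← intervalIntegral.integral_of_le hsA]
  rw [integral_rpow (Or.inr ⟨by norm_num, by
    rw [Set.uIcc_of_le hsA]
    intro h
    exact absurd h.1 (not_le.mpr hs)⟩)]
  have hA : 0 < A := hs.trans_le hsA
  rw [show (-3 : ℝ) + 1 = -(2:ℕ) by norm_num, Real.rpow_neg hs.le, Real.rpow_neg hA.le,
    Real.rpow_natCast, Real.rpow_natCast]
  ring

lemma lower_bound {s : ℝ} (hs : 0 < s) (hs1 : s < 1) :
    g3 s * (g3 (Real.sqrt s))⁻¹ ^ 2 * ((1 - s) / 2)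
      ≤ v3 s * ∫ t in Ioi s, t / (v3 t) ^ 2 := by
  set A := Real.sqrt s with hA
  have hApos : 0 < A := Real.sqrt_pos.mpr hs
  have hsA : s ≤ A := by
    have h := Real.sqrt_le_sqrt (show s ^ 2 ≤ s by nlinarith)
    rwa [Real.sqrt_sq hs.le] at h
  have hA2 : A ^ 2 = s := Real.sq_sqrt hs.le
  have hInt : (g3 A)⁻¹ ^ 2 * (((s ^ 2)⁻¹ - (A ^ 2)⁻¹) / 2)
      ≤ ∫ t in Ioi s, t / (v3 t) ^ 2 := by
    calc (g3 A)⁻¹ ^ 2 * (((s ^ 2)⁻¹ - (A ^ 2)⁻¹) / 2)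
        = ∫ t in Ioc s A, (g3 A)⁻¹ ^ 2 * t ^ (-3 : ℝ) := by
          rw [MeasureTheory.integral_const_mul, integral_rpow3_Ioc hs hsA]
      _ ≤ ∫ t in Ioc s A, t / (v3 t) ^ 2 := by
          apply setIntegral_mono_on
            ((show IntegrableOn (fun t : ℝ => (g3 A)⁻¹ ^ 2 * t ^ (-3 : ℝ)) (Ioi s) volume from
              (integrableOn_rpow3 hs).const_mul _).mono_set Ioc_subset_Ioi_self)
            ((integrableOn_f hs).mono_set Ioc_subset_Ioi_self) measurableSet_Ioc
          intro t ht
          have ht0 : 0 < t := hs.trans ht.1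
          rw [integrand_eq ht0]
          apply mul_le_mul_of_nonneg_right _ (Real.rpow_nonneg ht0.le _)
          apply pow_le_pow_left₀ (inv_nonneg.mpr (g3_pos A).le)
          exact inv_anti₀ (g3_pos t) (g3_mono ht0.le ht.2)
      _ ≤ ∫ t in Ioi s, t / (v3 t) ^ 2 := by
          apply setIntegral_mono_set (integrableOn_f hs)
          · filter_upwards [ae_restrict_mem measurableSet_Ioi] with t ht
            have ht0 : 0 < t := hs.trans ht
            rw [integrand_eq ht0]
            positivity
          · exact HasSubset.Subset.eventuallyLE Ioc_subset_Ioi_self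
  calc g3 s * (g3 A)⁻¹ ^ 2 * ((1 - s) / 2)
      = v3 s * ((g3 A)⁻¹ ^ 2 * (((s ^ 2)⁻¹ - (A ^ 2)⁻¹) / 2)) := by
        rw [v3_eq, hA2]
        have h2 : s ≠ 0 := hs.ne'
        have key : 1 - s = s ^ 2 * ((s ^ 2)⁻¹ - s⁻¹) := by field_simp
        rw [key]; ring
    _ ≤ v3 s * ∫ t in Ioi s, t / (v3 t) ^ 2 :=
        mul_le_mul_of_nonneg_left hInt (v3_pos hs).le

lemma sqrt_tendsto : Tendsto Real.sqrt (nhdsWithin 0 (Set.Ioi 0)) (nhdsWithin 0 (Set.Ioi 0)) := by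
  rw [tendsto_nhdsWithin_iff]
  constructor
  · have : Tendsto Real.sqrt (nhds 0) (nhds 0) := by
      have := Real.continuous_sqrt.tendsto 0
      simpa using this
    exact this.mono_left nhdsWithin_le_nhds
  · filter_upwards [self_mem_nhdsWithin] with x hx
    exact Real.sqrt_pos.mpr hx

lemma lo_tendsto : Tendsto (fun s : ℝ => g3 s * (g3 (Real.sqrt s))⁻¹ ^ 2 * ((1 - s) / 2))
    (nhdsWithin 0 (Set.Ioi 0)) (nhds (1 / 2)) := by
  have h1 : Tendsto (fun s : ℝ => g3 (Real.sqrt s)) (nhdsWithin 0 (Set.Ioi 0)) (nhds 1) :=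
    g3_tendsto_one.comp sqrt_tendsto
  have h2 : Tendsto (fun s : ℝ => (1 - s) / 2) (nhdsWithin 0 (Set.Ioi 0)) (nhds (1 / 2)) := by
    have : Tendsto (fun s : ℝ => (1 - s) / 2) (nhds 0) (nhds ((1 - 0) / 2)) :=
      (tendsto_const_nhds.sub tendsto_id).div_const 2
    simpa using this.mono_left nhdsWithin_le_nhds
  have := (g3_tendsto_one.mul ((h1.inv₀ one_ne_zero).pow 2)).mul h2
  simpa using this

lemma hi_tendsto : Tendsto (fun s : ℝ => 1 / (2 * g3 s))
    (nhdsWithin 0 (Set.Ioi 0)) (nhds (1 / 2)) := by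
  have := ((tendsto_const_nhds (x := (2:ℝ))).mul g3_tendsto_one).inv₀ (by norm_num)
  simp only [one_div]
  simpa using this

/-- `lim_{s → 0⁺} v₃(s) · ∫_s^∞ t / v₃(t)² dt = 1/2`. -/
theorem decaying_solution_value_at_zero :
    Tendsto (fun s : ℝ => v3 s * ∫ t in Set.Ioi s, t / (v3 t) ^ 2)
      (nhdsWithin 0 (Set.Ioi 0)) (nhds (1 / 2)) := by
  apply tendsto_of_tendsto_of_tendsto_of_le_of_le' lo_tendsto hi_tendsto
  · filter_upwards [Ioo_mem_nhdsGT_of_mem (show (0:ℝ) ∈ Ico 0 1 by norm_num)] with s hs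
    exact lower_bound hs.1 hs.2
  · filter_upwards [self_mem_nhdsWithin] with s hs
    exact upper_bound hs
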